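/- arXiv:2511.01933 — 3 statements merged into one kernel-verified Lean document; each statement's English description precedes it below -/
import Mathlib

section
/- Let H be a complex Hilbert space, T > 0, and let ζ : ℝ → H be continuous and T-periodically correlated, i.e. ⟨ζ(t+T), ζ(s+T)⟩_H = ⟨ζ(t), ζ(s)⟩_H for all t,s ∈ ℝ. For j ∈ ℤ and integer k ≥ 1 define the Fourier coefficient vectors ζ_{j,k} := T^{-1/2} ∫₀ᵀ ζ(u+jT)·exp(−2πi·((-1)^k·⌊k/2⌋)·u/T) du ∈ H (Bochner integral). Then the family of coefficient sequences is jointly wide-sense stationary: for all j₁, j₂ ∈ ℤ and all integers k, n ≥ 1, ⟨ζ_{j₁,k}, ζ_{j₂,n}⟩_H = ⟨ζ_{j₁−j₂,k}, ζ_{0,n}⟩_H, i.e. the correlation depends on j₁ and j₂ only through their difference j₁ − j₂. -/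
open MeasureTheory

noncomputable section

/- STATEMENT 2: For a continuous `T`-periodically correlated `ζ : ℝ → H`, the Fourier
coefficient vectors `ζ_{j,k} = T^{-1/2} ∫₀ᵀ ζ(u+jT)·exp(-2πi·((-1)^k⌊k/2⌋)·u/T) du`
form a jointly wide-sense stationary family:
`⟨ζ_{j₁,k}, ζ_{j₂,n}⟩ = ⟨ζ_{j₁-j₂,k}, ζ_{0,n}⟩` for all `j₁ j₂ ∈ ℤ`, `k, n ≥ 1`. -/
theorem fourier_coefficients_jointly_stationary
    {H : Type*} [NormedAddCommGroup H] [InnerProductSpace ℂ H] [CompleteSpace H]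
    (T : ℝ) (hT : 0 < T) (ζ : ℝ → H) (hcont : Continuous ζ)
    (hpc : ∀ t s : ℝ, (inner ℂ (ζ (t + T)) (ζ (s + T)) : ℂ) = inner ℂ (ζ t) (ζ s))
    (Z : ℤ → ℕ → H)
    (hZ : ∀ (j : ℤ) (k : ℕ), Z j k =
      ((Real.sqrt T : ℂ))⁻¹ •
        ∫ u in Set.Ico (0 : ℝ) T,
          Complex.exp (-(2 * Real.pi * Complex.I) *
              ((((-1 : ℤ) ^ k * ((k : ℤ) / 2) : ℤ) : ℂ)) * (u : ℂ) / (T : ℂ)) •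
            ζ (u + (j : ℝ) * T)) :
    ∀ (j₁ j₂ : ℤ) (k n : ℕ), 1 ≤ k → 1 ≤ n →
      (inner ℂ (Z j₁ k) (Z j₂ n) : ℂ) = inner ℂ (Z (j₁ - j₂) k) (Z 0 n) := by
  -- shift lemma
  have hshift : ∀ (m : ℤ) (t s : ℝ),
      (inner ℂ (ζ (t + m * T)) (ζ (s + m * T)) : ℂ) = inner ℂ (ζ t) (ζ s) := by
    intro m
    induction m using Int.induction_on with
    | zero => simp
    | succ i ih =>
      intro t s
      have h1 : t + (((i : ℤ) + 1 : ℤ) : ℝ) * T = (t + ((i : ℤ) : ℝ) * T) + T := by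
        push_cast; ring
      have h2 : s + (((i : ℤ) + 1 : ℤ) : ℝ) * T = (s + ((i : ℤ) : ℝ) * T) + T := by
        push_cast; ring
      rw [h1, h2, hpc, ih]
    | pred i ih =>
      intro t s
      have h1 : t + (((-i : ℤ)) : ℝ) * T = (t + (((-i - 1 : ℤ)) : ℝ) * T) + T := by
        push_cast; ring
      have h2 : s + (((-i : ℤ)) : ℝ) * T = (s + (((-i - 1 : ℤ)) : ℝ) * T) + T := by
        push_cast; ring
      calc (inner ℂ (ζ (t + ((-i - 1 : ℤ) : ℝ) * T)) (ζ (s + ((-i - 1 : ℤ) : ℝ) * T)) : ℂ)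
          = inner ℂ (ζ ((t + ((-i - 1 : ℤ) : ℝ) * T) + T))
              (ζ ((s + ((-i - 1 : ℤ) : ℝ) * T) + T)) := (hpc _ _).symm
        _ = inner ℂ (ζ (t + ((-i : ℤ) : ℝ) * T)) (ζ (s + ((-i : ℤ) : ℝ) * T)) := by
              rw [← h1, ← h2]
        _ = inner ℂ (ζ t) (ζ s) := ih t s
  intro j₁ j₂ k n _ _
  set e : ℕ → ℝ → ℂ := fun k u => Complex.exp (-(2 * Real.pi * Complex.I) *
      ((((-1 : ℤ) ^ k * ((k : ℤ) / 2) : ℤ) : ℂ)) * (u : ℂ) / (T : ℂ)) with he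
  set f : ℤ → ℕ → ℝ → H := fun j k u => e k u • ζ (u + (j : ℝ) * T) with hf
  have hconte : ∀ k, Continuous (e k) := fun k =>
    Complex.continuous_exp.comp (by continuity)
  have hintf : ∀ j k, IntegrableOn (f j k) (Set.Ico (0:ℝ) T) := by
    intro j k
    exact ((hconte k).smul (hcont.comp (by continuity))).integrableOn_Icc.mono_set
      Set.Ico_subset_Icc_self
  have key : ∀ (g : ℝ → H) (y : H), IntegrableOn g (Set.Ico (0:ℝ) T) →
      (inner ℂ (∫ u in Set.Ico (0:ℝ) T, g u) y : ℂ)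
        = ∫ u in Set.Ico (0:ℝ) T, (inner ℂ (g u) y : ℂ) := by
    intro g y hg
    calc (inner ℂ (∫ u in Set.Ico (0:ℝ) T, g u) y : ℂ)
        = (starRingEnd ℂ) (inner ℂ y (∫ u in Set.Ico (0:ℝ) T, g u)) :=
          (inner_conj_symm _ _).symm
      _ = (starRingEnd ℂ) (∫ u in Set.Ico (0:ℝ) T, (inner ℂ y (g u) : ℂ)) := by
          rw [integral_inner hg]
      _ = ∫ u in Set.Ico (0:ℝ) T, (starRingEnd ℂ) (inner ℂ y (g u) : ℂ) := by
          rw [integral_conj]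
      _ = ∫ u in Set.Ico (0:ℝ) T, (inner ℂ (g u) y : ℂ) := by
          simp_rw [inner_conj_symm]
  have main : ∀ (j j' : ℤ),
      (inner ℂ (Z j k) (Z j' n) : ℂ)
        = (starRingEnd ℂ) ((Real.sqrt T : ℂ))⁻¹ * (((Real.sqrt T : ℂ))⁻¹ *
          ∫ v in Set.Ico (0:ℝ) T, ∫ u in Set.Ico (0:ℝ) T,
            (starRingEnd ℂ) (e k u) * (e n v *
              (inner ℂ (ζ (u + (j : ℝ) * T)) (ζ (v + (j' : ℝ) * T)) : ℂ))) := by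
    intro j j'
    rw [hZ j k, hZ j' n, inner_smul_left, inner_smul_right]
    congr 2
    rw [← integral_inner (hintf j' n)]
    congr 1
    ext v
    rw [key _ _ (hintf j k)]
    congr 1
    ext u
    show (inner ℂ (f j k u) (f j' n v) : ℂ) = _
    rw [hf]
    simp only [inner_smul_left, inner_smul_right]
    ring
  rw [main j₁ j₂, main (j₁ - j₂) 0]
  congr 2
  apply setIntegral_congr_fun measurableSet_Ico
  intro v _
  apply setIntegral_congr_fun measurableSet_Ico
  intro u _
  dsimp only
  have h3 : u + (j₁ : ℝ) * T = (u + ((j₁ - j₂ : ℤ) : ℝ) * T) + (j₂ : ℝ) * T := by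
    push_cast; ring
  rw [h3, hshift]
  norm_num
end
end

section
/- Let ℓ² = ℓ²(ℕ;ℂ) and let F : [−π,π) → B(ℓ²) be weakly measurable with bounded, self-adjoint, positive semidefinite values. Let a : ℕ → ℓ² satisfy Σ_{j=0}^∞ ‖a_j‖ < ∞ and set A(λ) = Σ_{j=0}^∞ a_j e^{ijλ}. Suppose h⁰ is a negative-frequency function such that w(λ) := F(λ)(A(λ)−h⁰(λ)) satisfies ∫_{−π}^{π} ‖w(λ)‖² dλ < ∞ and ∫_{−π}^{π} w(λ)·e^{−ijλ} dλ = 0 for every integer j ≤ −1, and such that Δ(h⁰) := (1/2π)∫_{−π}^{π} ⟨F(λ)(A(λ)−h⁰(λ)), A(λ)−h⁰(λ)⟩ dλ < ∞. Define c_j := (1/2π)·∫_{−π}^{π} w(λ)·e^{−ijλ} dλ ∈ ℓ² for j ≥ 0. Then the value of the error functional is Δ(h⁰) = Σ_{j=0}^∞ ⟨c_j, a_j⟩, where ⟨x,y⟩ = Σ_k x_k·conj(y_k); in particular this series converges and its sum is real and nonnegative. -/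
open MeasureTheory
open scoped ENNReal

noncomputable section

/-- The space `ℓ² = ℓ²(ℕ; ℂ)`. -/
abbrev Elltwo : Type := lp (fun _ : ℕ => ℂ) 2

/-- Lebesgue measure restricted to `[-π, π)`. -/
def pmeas : Measure ℝ := volume.restrict (Set.Ico (-Real.pi) Real.pi)

/-- A square-integrable function `h : [-π,π) → ℓ²` is a negative-frequency function if
its Fourier coefficients `∫ h(λ)·e^{-ijλ} dλ` vanish for every integer `j ≥ 0`. -/
def NegFreq (h : ℝ → Elltwo) : Prop :=
  MemLp h 2 pmeas ∧
  ∀ j : ℤ, 0 ≤ j →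
    (∫ l, Complex.exp (-Complex.I * (j : ℂ) * (l : ℂ)) • h l ∂pmeas) = 0

/-- The noise-free mean-square-error functional
`Δ(h) = (1/2π)·∫_{-π}^{π} ⟨F(λ)(A(λ)-h(λ)), A(λ)-h(λ)⟩ dλ`, with values in `[0, ∞]`. -/
def MSE0 (F : ℝ → Elltwo →L[ℂ] Elltwo) (A : ℝ → Elltwo) (h : ℝ → Elltwo) : ℝ≥0∞ :=
  ENNReal.ofReal (1 / (2 * Real.pi)) *
    ∫⁻ l, ENNReal.ofReal ((inner ℂ ((F l) (A l - h l)) (A l - h l) : ℂ)).re ∂pmeas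

/- STATEMENT 7: noise-free error formula `Δ(h⁰) = Σ_{j≥0} ⟨c_j, a_j⟩`, where
`c_j = (1/2π)∫ F(λ)(A(λ)-h⁰(λ))·e^{-ijλ} dλ`; here the paper's inner product
`⟨c, a⟩ = Σ_k c_k·conj(a_k)` is Mathlib's `inner a c` (conjugate-linear in the first
slot). In particular the series converges and its sum is real and nonnegative. -/

instance : IsFiniteMeasure pmeas :=
  ⟨by rw [pmeas, Measure.restrict_apply_univ]; exact measure_Ico_lt_top⟩

instance : Fact (0 < 2 * Real.pi) := ⟨by positivity⟩

lemma pmeas_eq_Ioc : pmeas = volume.restrict (Set.Ioc (-Real.pi) Real.pi) :=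
  Measure.restrict_congr_set Ico_ae_eq_Ioc

lemma liftIco_comp_ae (f : ℝ → ℂ) :
    (fun l : ℝ => AddCircle.liftIco (2*Real.pi) (-Real.pi) f (↑l))
      =ᵐ[volume.restrict (Set.Ioc (-Real.pi) (-Real.pi + 2*Real.pi))] f := by
  have hb : ∀ᵐ l : ℝ ∂volume, l ≠ -Real.pi + 2*Real.pi := by
    rw [ae_iff]
    simpa [Set.setOf_eq_eq_singleton] using
      measure_singleton (α := ℝ) (-Real.pi + 2*Real.pi)
  filter_upwards [ae_restrict_mem measurableSet_Ioc, ae_restrict_of_ae hb] with l hl hne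
  exact AddCircle.liftIco_coe_apply ⟨hl.1.le, lt_of_le_of_ne hl.2 hne⟩

open AddCircle in
lemma memLp_liftIco (f : ℝ → ℂ) (hfm : Measurable f) (hf : MemLp f 2 pmeas) :
    MemLp (AddCircle.liftIco (2*Real.pi) (-Real.pi) f) 2
      (@AddCircle.haarAddCircle (2*Real.pi) _) := by
  have hUm : Measurable (AddCircle.liftIco (2*Real.pi) (-Real.pi) f) := by
    have : AddCircle.liftIco (2*Real.pi) (-Real.pi) f
        = (fun x : Set.Ico (-Real.pi) (-Real.pi + 2*Real.pi) => f x) ∘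
          (AddCircle.measurableEquivIco (2*Real.pi) (-Real.pi)) := rfl
    rw [this]
    exact (hfm.comp measurable_subtype_coe).comp
      (AddCircle.measurableEquivIco _ _).measurable
  have hvol : MemLp (AddCircle.liftIco (2*Real.pi) (-Real.pi) f) 2
      (volume : Measure (AddCircle (2*Real.pi))) := by
    refine ⟨hUm.aestronglyMeasurable, ?_⟩
    rw [← (AddCircle.measurePreserving_mk (2*Real.pi) (-Real.pi)).map_eq,
      eLpNorm_map_measure (by
        rw [(AddCircle.measurePreserving_mk (2*Real.pi) (-Real.pi)).map_eq]
        exact hUm.aestronglyMeasurable) AddCircle.measurable_mk'.aemeasurable]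
    rw [show AddCircle.liftIco (2*Real.pi) (-Real.pi) f ∘ (QuotientAddGroup.mk : ℝ → AddCircle (2*Real.pi)) = fun l : ℝ => AddCircle.liftIco (2*Real.pi) (-Real.pi) f (↑l) from rfl,
      eLpNorm_congr_ae (liftIco_comp_ae f)]
    have : volume.restrict (Set.Ioc (-Real.pi) (-Real.pi + 2*Real.pi)) = pmeas := by
      rw [pmeas_eq_Ioc, show -Real.pi + 2*Real.pi = Real.pi by ring]
    rw [this]
    exact hf.2
  have hh : (@AddCircle.haarAddCircle (2*Real.pi) _)
      = (ENNReal.ofReal (2*Real.pi))⁻¹ • (volume : Measure (AddCircle (2*Real.pi))) := by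
    rw [AddCircle.volume_eq_smul_haarAddCircle, smul_smul,
      ENNReal.inv_mul_cancel (by simp [Real.pi_pos]) ENNReal.ofReal_ne_top, one_smul]
  rw [hh]
  exact hvol.smul_measure (by simp [Real.pi_pos])

lemma fourier_integral_ae_transfer (f : ℝ → ℂ) (n : ℤ) :
    (∫ x in Set.Ioc (-Real.pi) (-Real.pi + 2*Real.pi),
        fourier (-n) (x : AddCircle (-Real.pi + 2*Real.pi - -Real.pi)) • f x)
      = ∫ l, Complex.exp (-Complex.I * (n:ℂ) * (l:ℂ)) * f l ∂pmeas := by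
  rw [pmeas_eq_Ioc, show Set.Ioc (-Real.pi) Real.pi
      = Set.Ioc (-Real.pi) (-Real.pi + 2*Real.pi) by rw [show -Real.pi + 2*Real.pi = Real.pi by ring]]
  refine setIntegral_congr_fun measurableSet_Ioc fun x _ => ?_
  rw [fourier_coe_apply, smul_eq_mul]
  congr 2
  have hπ : ((Real.pi : ℂ)) ≠ 0 := Complex.ofReal_ne_zero.mpr Real.pi_ne_zero
  have hden : ((-Real.pi + 2*Real.pi - -Real.pi : ℝ) : ℂ) ≠ 0 := by
    push_cast
    intro h
    apply hπ
    linear_combination h / 2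
  rw [div_eq_iff hden]
  push_cast
  ring

lemma fourierCoeff_lift_eq_zero (f : ℝ → ℂ) (n : ℤ)
    (h : ∫ l, Complex.exp (-Complex.I * (n:ℂ) * (l:ℂ)) * f l ∂pmeas = 0) :
    fourierCoeff (AddCircle.liftIco (2*Real.pi) (-Real.pi) f) n = 0 := by
  rw [fourierCoeff_liftIco_eq, fourierCoeffOn_eq_integral,
    intervalIntegral.integral_of_le (by linarith [Real.pi_pos]),
    fourier_integral_ae_transfer, h, smul_zero]

lemma parseval_orth (u v : ℝ → ℂ) (hum : Measurable u) (hvm : Measurable v)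
    (hu : MemLp u 2 pmeas) (hv : MemLp v 2 pmeas)
    (hucoeff : ∀ n : ℤ, n ≤ -1 →
      ∫ l, Complex.exp (-Complex.I * (n:ℂ) * (l:ℂ)) * u l ∂pmeas = 0)
    (hvcoeff : ∀ n : ℤ, 0 ≤ n →
      ∫ l, Complex.exp (-Complex.I * (n:ℂ) * (l:ℂ)) * v l ∂pmeas = 0) :
    ∫ l, (starRingEnd ℂ) (u l) * v l ∂pmeas = 0 := by
  set U := AddCircle.liftIco (2*Real.pi) (-Real.pi) u with hU
  set V := AddCircle.liftIco (2*Real.pi) (-Real.pi) v with hV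
  have hU2 := memLp_liftIco u hum hu
  have hV2 := memLp_liftIco v hvm hv
  set Ulp := hU2.toLp U with hUlp
  set Vlp := hV2.toLp V with hVlp
  have hcoeffU : ∀ i : ℤ, fourierCoeff (Ulp : AddCircle (2*Real.pi) → ℂ) i = fourierCoeff U i := by
    intro i
    simp only [fourierCoeff]
    refine integral_congr_ae ?_
    filter_upwards [hU2.coeFn_toLp] with t ht
    rw [ht]
  have hcoeffV : ∀ i : ℤ, fourierCoeff (Vlp : AddCircle (2*Real.pi) → ℂ) i = fourierCoeff V i := by
    intro i
    simp only [fourierCoeff]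
    refine integral_congr_ae ?_
    filter_upwards [hV2.coeFn_toLp] with t ht
    rw [ht]
  have hinner : (inner ℂ Ulp Vlp : ℂ) = 0 := by
    rw [← fourierBasis.repr.inner_map_map Ulp Vlp, lp.inner_eq_tsum]
    have hz : (fun i : ℤ => (inner ℂ ((fourierBasis.repr Ulp) i) ((fourierBasis.repr Vlp) i) : ℂ))
        = fun _ => 0 := by
      funext i
      rcases le_or_gt 0 i with hi | hi
      · rw [fourierBasis_repr Vlp i, hcoeffV i, fourierCoeff_lift_eq_zero v i (hvcoeff i hi)]
        simp
      · rw [fourierBasis_repr Ulp i, hcoeffU i, fourierCoeff_lift_eq_zero u i (hucoeff i (by omega))]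
        simp
    rw [hz, tsum_zero]
  have hinner2 : (inner ℂ Ulp Vlp : ℂ)
      = ∫ t, (starRingEnd ℂ) (U t) * V t ∂(@AddCircle.haarAddCircle (2*Real.pi) _) := by
    rw [L2.inner_def]
    refine integral_congr_ae ?_
    filter_upwards [hU2.coeFn_toLp, hV2.coeFn_toLp] with t h1 h2
    rw [h1, h2, RCLike.inner_apply]; exact mul_comm _ _
  have hhaar : ∫ t, (starRingEnd ℂ) (U t) * V t ∂(@AddCircle.haarAddCircle (2*Real.pi) _) = 0 := by
    rw [← hinner2, hinner]
  have hvolint : ∫ t, (starRingEnd ℂ) (U t) * V t ∂(volume : Measure (AddCircle (2*Real.pi))) = 0 := by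
    rw [AddCircle.volume_eq_smul_haarAddCircle, integral_smul_measure, hhaar, smul_zero]
  have hpre := AddCircle.integral_preimage (2*Real.pi) (-Real.pi)
    (fun t : AddCircle (2*Real.pi) => (starRingEnd ℂ) (U t) * V t)
  rw [hvolint] at hpre
  have : ∫ l in Set.Ioc (-Real.pi) (-Real.pi + 2*Real.pi),
      (starRingEnd ℂ) (u l) * v l = 0 := by
    rw [← hpre]
    refine integral_congr_ae ?_
    filter_upwards [liftIco_comp_ae u, liftIco_comp_ae v] with l h1 h2
    rw [← h1, ← h2]
  rw [pmeas_eq_Ioc, show Set.Ioc (-Real.pi) Real.pi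
      = Set.Ioc (-Real.pi) (-Real.pi + 2*Real.pi) by rw [show -Real.pi + 2*Real.pi = Real.pi by ring]]
  exact this

/-- Coordinate evaluation as a continuous linear map on `ℓ²`. -/
def evalCLM (k : ℕ) : Elltwo →L[ℂ] ℂ := innerSL ℂ (lp.single 2 k (1:ℂ))

lemma evalCLM_apply (k : ℕ) (x : Elltwo) : evalCLM k x = x k := by
  simp [evalCLM, innerSL_apply_apply, lp.inner_single_left]

lemma tsum_nnnorm_sq (x : Elltwo) :
    ∑' k : ℕ, (‖x k‖₊ : ℝ≥0∞) ^ (2:ℕ) = (‖x‖₊ : ℝ≥0∞) ^ (2:ℕ) := by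
  have h := lp.hasSum_norm (p := 2) (by norm_num) x
  have h2 : ((2:ℝ≥0∞).toReal) = (2:ℝ) := by norm_num
  rw [h2] at h
  have hsum : Summable fun k : ℕ => ‖x k‖ ^ (2:ℝ) := h.summable
  have ht := h.tsum_eq
  calc ∑' k : ℕ, (‖x k‖₊ : ℝ≥0∞) ^ (2:ℕ)
      = ∑' k : ℕ, ENNReal.ofReal (‖x k‖ ^ (2:ℝ)) := by
        refine tsum_congr fun k => ?_
        rw [show (2:ℝ) = ((2:ℕ):ℝ) by norm_num, Real.rpow_natCast,
          ENNReal.ofReal_pow (norm_nonneg _), ofReal_norm, enorm_eq_nnnorm]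
    _ = ENNReal.ofReal (∑' k : ℕ, ‖x k‖ ^ (2:ℝ)) := by
        rw [ENNReal.ofReal_tsum_of_nonneg (fun k => Real.rpow_nonneg (norm_nonneg _) _) hsum]
    _ = (‖x‖₊ : ℝ≥0∞) ^ (2:ℕ) := by
        rw [ht, show (2:ℝ) = ((2:ℕ):ℝ) by norm_num, Real.rpow_natCast,
          ENNReal.ofReal_pow (norm_nonneg _), ofReal_norm, enorm_eq_nnnorm]

lemma lintegral_nnnorm_sq_lt_top {f : ℝ → Elltwo} (hf : MemLp f 2 pmeas) :
    ∫⁻ l, (‖f l‖₊ : ℝ≥0∞) ^ (2:ℕ) ∂pmeas < ⊤ := by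
  have h := hf.2
  rw [eLpNorm_eq_eLpNorm' two_ne_zero ENNReal.ofNat_ne_top] at h
  have h2 := lintegral_rpow_enorm_lt_top_of_eLpNorm'_lt_top
    (by norm_num : (0:ℝ) < (2:ℝ≥0∞).toReal) h
  refine lt_of_eq_of_lt ?_ h2
  refine lintegral_congr fun l => ?_
  rw [← ENNReal.rpow_natCast]
  norm_num
  rfl

lemma integrable_inner_of_memL2 {f g : ℝ → Elltwo} (hf : MemLp f 2 pmeas) (hg : MemLp g 2 pmeas) :
    Integrable (fun l => (inner ℂ (f l) (g l) : ℂ)) pmeas := by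
  have h := L2.integrable_inner (𝕜 := ℂ) (hf.toLp f) (hg.toLp g)
  refine h.congr ?_
  filter_upwards [hf.coeFn_toLp, hg.coeFn_toLp] with l h1 h2
  rw [h1, h2]

lemma norm_exp_int (n : ℤ) (l : ℝ) : ‖Complex.exp (-Complex.I * (n:ℂ) * (l:ℂ))‖ = 1 := by
  rw [show -Complex.I * (n:ℂ) * (l:ℂ) = ((-(n*l) : ℝ) : ℂ) * Complex.I by push_cast; ring,
    Complex.norm_exp_ofReal_mul_I]

lemma norm_exp_nat (n : ℕ) (l : ℝ) : ‖Complex.exp (Complex.I * (n:ℂ) * (l:ℂ))‖ = 1 := by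
  rw [show Complex.I * (n:ℂ) * (l:ℂ) = (((n*l) : ℝ) : ℂ) * Complex.I by push_cast; ring,
    Complex.norm_exp_ofReal_mul_I]

lemma norm_exp_nat' (n : ℕ) (l : ℝ) : ‖Complex.exp (-Complex.I * (n:ℂ) * (l:ℂ))‖ = 1 := by
  rw [show -Complex.I * (n:ℂ) * (l:ℂ) = ((-(n*l) : ℝ) : ℂ) * Complex.I by push_cast; ring,
    Complex.norm_exp_ofReal_mul_I]

lemma exp_smul_integrable {f : ℝ → Elltwo} (hf : MemLp f 2 pmeas) (n : ℤ) :
    Integrable (fun l : ℝ => Complex.exp (-Complex.I * (n:ℂ) * (l:ℂ)) • f l) pmeas := by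
  have hIf : Integrable f pmeas := hf.integrable one_le_two
  have hcont : Continuous fun l : ℝ => Complex.exp (-Complex.I * (n:ℂ) * (l:ℂ)) :=
    Complex.continuous_exp.comp (continuous_const.mul Complex.continuous_ofReal)
  refine Integrable.mono' hIf.norm (hcont.aestronglyMeasurable.smul hf.1) ?_
  refine Filter.Eventually.of_forall fun l => ?_
  rw [norm_smul, norm_exp_int, one_mul]

lemma inner_orth {w h0 : ℝ → Elltwo} (hw2 : MemLp w 2 pmeas) (hh2 : MemLp h0 2 pmeas)
    (hwo : ∀ n : ℤ, n ≤ -1 →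
      (∫ l, Complex.exp (-Complex.I * (n:ℂ) * (l:ℂ)) • w l ∂pmeas) = 0)
    (hho : ∀ n : ℤ, 0 ≤ n →
      (∫ l, Complex.exp (-Complex.I * (n:ℂ) * (l:ℂ)) • h0 l ∂pmeas) = 0) :
    ∫ l, (inner ℂ (w l) (h0 l) : ℂ) ∂pmeas = 0 := by
  set wm := hw2.1.mk w with hwmdef
  set hm := hh2.1.mk h0 with hhmdef
  have hwm : StronglyMeasurable wm := hw2.1.stronglyMeasurable_mk
  have hhm : StronglyMeasurable hm := hh2.1.stronglyMeasurable_mk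
  have hww : w =ᵐ[pmeas] wm := hw2.1.ae_eq_mk
  have hhh : h0 =ᵐ[pmeas] hm := hh2.1.ae_eq_mk
  have hwm2 : MemLp wm 2 pmeas := hw2.ae_eq hww
  have hhm2 : MemLp hm 2 pmeas := hh2.ae_eq hhh
  have hmeasw : ∀ k : ℕ, Measurable fun l => wm l k := by
    intro k
    have : (fun l => wm l k) = fun l => evalCLM k (wm l) := by
      funext l; rw [evalCLM_apply]
    rw [this]
    exact ((evalCLM k).continuous.comp_stronglyMeasurable hwm).measurable
  have hmeash : ∀ k : ℕ, Measurable fun l => hm l k := by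
    intro k
    have : (fun l => hm l k) = fun l => evalCLM k (hm l) := by
      funext l; rw [evalCLM_apply]
    rw [this]
    exact ((evalCLM k).continuous.comp_stronglyMeasurable hhm).measurable
  have hmemw : ∀ k : ℕ, MemLp (fun l => wm l k) 2 pmeas := fun k =>
    MemLp.of_le hwm2 (hmeasw k).aestronglyMeasurable
      (Filter.Eventually.of_forall fun l =>
        lp.norm_apply_le_norm (by norm_num) (wm l) k)
  have hmemh : ∀ k : ℕ, MemLp (fun l => hm l k) 2 pmeas := fun k =>
    MemLp.of_le hhm2 (hmeash k).aestronglyMeasurable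
      (Filter.Eventually.of_forall fun l =>
        lp.norm_apply_le_norm (by norm_num) (hm l) k)
  -- componentwise coefficient computation
  have hcoeff : ∀ (f : ℝ → Elltwo) (hf : MemLp f 2 pmeas) (k : ℕ) (n : ℤ),
      (∫ l, Complex.exp (-Complex.I * (n:ℂ) * (l:ℂ)) • f l ∂pmeas) = 0 →
      ∫ l, Complex.exp (-Complex.I * (n:ℂ) * (l:ℂ)) * (hf.1.mk f l) k ∂pmeas = 0 := by
    intro f hf k n h0int
    have hint := exp_smul_integrable hf n
    have h1 : (fun l => Complex.exp (-Complex.I * (n:ℂ) * (l:ℂ)) * (hf.1.mk f l) k)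
        =ᵐ[pmeas] fun l => evalCLM k (Complex.exp (-Complex.I * (n:ℂ) * (l:ℂ)) • f l) := by
      filter_upwards [hf.1.ae_eq_mk] with l hl
      rw [_root_.map_smul, smul_eq_mul, evalCLM_apply, hl]
    rw [integral_congr_ae h1, ContinuousLinearMap.integral_comp_comm _ hint, h0int, map_zero]
  -- per-component orthogonality
  have hcomp : ∀ k : ℕ,
      ∫ l, (starRingEnd ℂ) (wm l k) * hm l k ∂pmeas = 0 := by
    intro k
    refine parseval_orth _ _ (hmeasw k) (hmeash k) (hmemw k) (hmemh k) ?_ ?_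
    · intro n hn; exact hcoeff w hw2 k n (hwo n hn)
    · intro n hn; exact hcoeff h0 hh2 k n (hho n hn)
  -- assemble
  have hstep1 : ∫ l, (inner ℂ (w l) (h0 l) : ℂ) ∂pmeas
      = ∫ l, (inner ℂ (wm l) (hm l) : ℂ) ∂pmeas := by
    refine integral_congr_ae ?_
    filter_upwards [hww, hhh] with l h1 h2
    rw [h1, h2]
  have hexpand : ∀ l, (inner ℂ (wm l) (hm l) : ℂ)
      = ∑' k : ℕ, (starRingEnd ℂ) (wm l k) * hm l k := by
    intro l
    rw [lp.inner_eq_tsum]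
    exact tsum_congr fun k => by rw [RCLike.inner_apply, mul_comm]
  have hmulmeas : ∀ k : ℕ, Measurable fun l => (starRingEnd ℂ) (wm l k) * hm l k := fun k =>
    (Complex.continuous_conj.measurable.comp' (hmeasw k)).mul (hmeash k)
  have hlin : (∑' k : ℕ, ∫⁻ l, ‖(starRingEnd ℂ) (wm l k) * hm l k‖ₑ ∂pmeas) ≠ ⊤ := by
    rw [← lintegral_tsum (fun k => ((hmulmeas k).enorm).aemeasurable)]
    have hptw : ∀ l, (∑' k : ℕ, (‖(starRingEnd ℂ) (wm l k) * hm l k‖₊ : ℝ≥0∞))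
        ≤ (‖wm l‖₊ : ℝ≥0∞) ^ (2:ℕ) + (‖hm l‖₊ : ℝ≥0∞) ^ (2:ℕ) := by
      intro l
      calc (∑' k : ℕ, (‖(starRingEnd ℂ) (wm l k) * hm l k‖₊ : ℝ≥0∞))
          ≤ ∑' k : ℕ, ((‖wm l k‖₊ : ℝ≥0∞) ^ (2:ℕ) + (‖hm l k‖₊ : ℝ≥0∞) ^ (2:ℕ)) := by
            refine ENNReal.tsum_le_tsum fun k => ?_
            rw [nnnorm_mul, RCLike.nnnorm_conj, ENNReal.coe_mul]
            rcases le_total (‖wm l k‖₊ : ℝ≥0∞) (‖hm l k‖₊ : ℝ≥0∞) with hle | hle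
            · refine le_add_of_nonneg_of_le zero_le ?_
              rw [pow_two]
              exact mul_le_mul_left hle _
            · refine le_add_of_le_of_nonneg ?_ zero_le
              rw [pow_two]
              exact mul_le_mul_right hle _
        _ = (‖wm l‖₊ : ℝ≥0∞) ^ (2:ℕ) + (‖hm l‖₊ : ℝ≥0∞) ^ (2:ℕ) := by
            rw [ENNReal.tsum_add, tsum_nnnorm_sq, tsum_nnnorm_sq]
    refine ne_of_lt (lt_of_le_of_lt (lintegral_mono hptw) ?_)
    rw [lintegral_add_left' (f := fun a => (‖wm a‖₊ : ℝ≥0∞) ^ (2:ℕ)) ((hwm.aestronglyMeasurable.enorm).pow_const _)]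
    exact ENNReal.add_lt_top.mpr ⟨lintegral_nnnorm_sq_lt_top hwm2, lintegral_nnnorm_sq_lt_top hhm2⟩
  have hmeasprod : ∀ k : ℕ,
      AEStronglyMeasurable (fun l => (starRingEnd ℂ) (wm l k) * hm l k) pmeas := fun k =>
    (hmulmeas k).aestronglyMeasurable
  rw [hstep1]
  calc ∫ l, (inner ℂ (wm l) (hm l) : ℂ) ∂pmeas
      = ∫ l, ∑' k : ℕ, (starRingEnd ℂ) (wm l k) * hm l k ∂pmeas := by
        refine integral_congr_ae (Filter.Eventually.of_forall fun l => hexpand l)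
    _ = ∑' k : ℕ, ∫ l, (starRingEnd ℂ) (wm l k) * hm l k ∂pmeas :=
        integral_tsum hmeasprod hlin
    _ = 0 := by simp [hcomp]

lemma exp_smul_integrable_nat {f : ℝ → Elltwo} (hf : MemLp f 2 pmeas) (j : ℕ) :
    Integrable (fun l : ℝ => Complex.exp (-Complex.I * (j:ℂ) * (l:ℂ)) • f l) pmeas := by
  have h := exp_smul_integrable hf (j : ℤ)
  have : (fun l : ℝ => Complex.exp (-Complex.I * ((j:ℤ):ℂ) * (l:ℂ)) • f l)
      = fun l : ℝ => Complex.exp (-Complex.I * (j:ℂ) * (l:ℂ)) • f l := by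
    norm_cast
  rwa [this] at h

lemma inner_A_part {w : ℝ → Elltwo} (hw2 : MemLp w 2 pmeas)
    (a : ℕ → Elltwo) (ha : Summable fun j : ℕ => ‖a j‖) :
    ∫ l, (inner ℂ (w l) (∑' j : ℕ, Complex.exp (Complex.I * (j:ℂ) * (l:ℂ)) • a j) : ℂ) ∂pmeas
      = ∑' j : ℕ,
          (inner ℂ (∫ l, Complex.exp (-Complex.I * (j:ℂ) * (l:ℂ)) • w l ∂pmeas) (a j) : ℂ) := by
  have hsumm : ∀ l : ℝ, Summable fun j : ℕ => Complex.exp (Complex.I * (j:ℂ) * (l:ℂ)) • a j := by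
    intro l
    refine Summable.of_norm ?_
    have : (fun j : ℕ => ‖Complex.exp (Complex.I * (j:ℂ) * (l:ℂ)) • a j‖)
        = fun j : ℕ => ‖a j‖ := by
      funext j; rw [norm_smul, norm_exp_nat, one_mul]
    rwa [this]
  have h1 : ∀ l : ℝ, (inner ℂ (w l) (∑' j : ℕ, Complex.exp (Complex.I * (j:ℂ) * (l:ℂ)) • a j) : ℂ)
      = ∑' j : ℕ, Complex.exp (Complex.I * (j:ℂ) * (l:ℂ)) * (inner ℂ (w l) (a j) : ℂ) := by
    intro l
    have h2 := (innerSL ℂ (w l)).map_tsum (hsumm l)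
    simp only [innerSL_apply_apply] at h2
    rw [h2]
    exact tsum_congr fun j => inner_smul_right _ _ _
  have hmeasj : ∀ j : ℕ, AEStronglyMeasurable
      (fun l : ℝ => Complex.exp (Complex.I * (j:ℂ) * (l:ℂ)) * (inner ℂ (w l) (a j) : ℂ)) pmeas := by
    intro j
    exact ((Complex.continuous_exp.comp
      (continuous_const.mul Complex.continuous_ofReal)).aestronglyMeasurable).mul
      (hw2.1.inner aestronglyMeasurable_const)
  have hwint : Integrable w pmeas := hw2.integrable one_le_two
  have hlintj : (∑' j : ℕ, ∫⁻ l,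
      ‖Complex.exp (Complex.I * (j:ℂ) * (l:ℂ)) * (inner ℂ (w l) (a j) : ℂ)‖₊ ∂pmeas) ≠ ⊤ := by
    have hbound : ∀ j : ℕ, (∫⁻ l,
        ‖Complex.exp (Complex.I * (j:ℂ) * (l:ℂ)) * (inner ℂ (w l) (a j) : ℂ)‖₊ ∂pmeas)
        ≤ (‖a j‖₊ : ℝ≥0∞) * ∫⁻ l, (‖w l‖₊ : ℝ≥0∞) ∂pmeas := by
      intro j
      rw [← lintegral_const_mul' _ _ ENNReal.coe_ne_top]
      refine lintegral_mono fun l => ?_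
      have he : (‖Complex.exp (Complex.I * (j:ℂ) * (l:ℂ))‖₊ : ℝ≥0∞) = 1 := by
        rw [← enorm_eq_nnnorm, ← ofReal_norm, norm_exp_nat]; simp
      rw [nnnorm_mul, ENNReal.coe_mul, he, one_mul]
      calc (‖(inner ℂ (w l) (a j) : ℂ)‖₊ : ℝ≥0∞) ≤ (‖w l‖₊ : ℝ≥0∞) * (‖a j‖₊ : ℝ≥0∞) := by
            exact_mod_cast nnnorm_inner_le_nnnorm (𝕜 := ℂ) (w l) (a j)
        _ = (‖a j‖₊ : ℝ≥0∞) * (‖w l‖₊ : ℝ≥0∞) := mul_comm _ _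
    refine ne_of_lt (lt_of_le_of_lt (ENNReal.tsum_le_tsum hbound) ?_)
    rw [ENNReal.tsum_mul_right]
    refine ENNReal.mul_lt_top ?_ ?_
    · rw [lt_top_iff_ne_top, ENNReal.tsum_coe_ne_top_iff_summable]
      have : (fun j : ℕ => (‖a j‖₊ : ℝ)) = fun j : ℕ => ‖a j‖ := by
        funext j; simp
      exact NNReal.summable_coe.mp (by rwa [this])
    · exact hwint.2
  calc ∫ l, (inner ℂ (w l) (∑' j : ℕ, Complex.exp (Complex.I * (j:ℂ) * (l:ℂ)) • a j) : ℂ) ∂pmeas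
      = ∫ l, ∑' j : ℕ, Complex.exp (Complex.I * (j:ℂ) * (l:ℂ)) * (inner ℂ (w l) (a j) : ℂ) ∂pmeas := by
        exact integral_congr_ae (Filter.Eventually.of_forall h1)
    _ = ∑' j : ℕ, ∫ l, Complex.exp (Complex.I * (j:ℂ) * (l:ℂ)) * (inner ℂ (w l) (a j) : ℂ) ∂pmeas :=
        integral_tsum hmeasj hlintj
    _ = ∑' j : ℕ,
          (inner ℂ (∫ l, Complex.exp (-Complex.I * (j:ℂ) * (l:ℂ)) • w l ∂pmeas) (a j) : ℂ) := by
        refine tsum_congr fun j => ?_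
        have hstep : ∀ l : ℝ, Complex.exp (Complex.I * (j:ℂ) * (l:ℂ)) * (inner ℂ (w l) (a j) : ℂ)
            = (starRingEnd ℂ)
                (inner ℂ (a j) (Complex.exp (-Complex.I * (j:ℂ) * (l:ℂ)) • w l) : ℂ) := by
          intro l
          rw [inner_smul_right, map_mul, inner_conj_symm]
          congr 1
          rw [← Complex.exp_conj]
          congr 1
          simp only [map_mul, map_neg, Complex.conj_I, Complex.conj_natCast, Complex.conj_ofReal]
          ring
        rw [integral_congr_ae (Filter.Eventually.of_forall hstep), integral_conj,
          integral_inner (exp_smul_integrable_nat hw2 j), inner_conj_symm]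

/- STATEMENT 7: noise-free error formula `Δ(h⁰) = Σ_{j≥0} ⟨c_j, a_j⟩`, where
`c_j = (1/2π)∫ F(λ)(A(λ)-h⁰(λ))·e^{-ijλ} dλ`; here the paper's inner product
`⟨c, a⟩ = Σ_k c_k·conj(a_k)` is Mathlib's `inner a c` (conjugate-linear in the first
slot). In particular the series converges and its sum is real and nonnegative. -/
theorem noise_free_error_formula
    (F : ℝ → Elltwo →L[ℂ] Elltwo)
    (hFw : ∀ x y : Elltwo, Measurable fun l : ℝ => (inner ℂ ((F l) x) y : ℂ))
    (hFpos : ∀ l : ℝ, (F l).IsPositive)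
    (a : ℕ → Elltwo) (ha : Summable fun j : ℕ => ‖a j‖)
    (A : ℝ → Elltwo)
    (hA : ∀ l : ℝ, A l = ∑' j : ℕ, Complex.exp (Complex.I * (j : ℂ) * (l : ℂ)) • a j)
    (h0 : ℝ → Elltwo) (hh0 : NegFreq h0)
    (w : ℝ → Elltwo)
    (hw : ∀ l : ℝ, w l = (F l) (A l - h0 l))
    (hwL2 : MemLp w 2 pmeas)
    (hworth : ∀ j : ℤ, j ≤ -1 →
      (∫ l, Complex.exp (-Complex.I * (j : ℂ) * (l : ℂ)) • w l ∂pmeas) = 0)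
    (hfin : MSE0 F A h0 < ⊤)
    (c : ℕ → Elltwo)
    (hc : ∀ j : ℕ, c j = ((2 * Real.pi : ℝ) : ℂ)⁻¹ •
      ∫ l, Complex.exp (-Complex.I * (j : ℂ) * (l : ℂ)) • w l ∂pmeas) :
    Summable (fun j : ℕ => (inner ℂ (a j) (c j) : ℂ)) ∧
    (∑' j : ℕ, (inner ℂ (a j) (c j) : ℂ)).im = 0 ∧
    0 ≤ (∑' j : ℕ, (inner ℂ (a j) (c j) : ℂ)).re ∧
    MSE0 F A h0 = ENNReal.ofReal (∑' j : ℕ, (inner ℂ (a j) (c j) : ℂ)).re := by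
  have h2pi_pos : (0:ℝ) < 2 * Real.pi := by positivity
  have h2pi : ((2 * Real.pi : ℝ) : ℂ) ≠ 0 := Complex.ofReal_ne_zero.mpr (ne_of_gt h2pi_pos)
  have hAeq : A = fun l : ℝ => ∑' j : ℕ, Complex.exp (Complex.I * (j:ℂ) * (l:ℂ)) • a j :=
    funext hA
  -- A is bounded continuous, hence in L²
  have hA2 : MemLp A 2 pmeas := by
    rw [hAeq]
    have hcont : Continuous fun l : ℝ =>
        ∑' j : ℕ, Complex.exp (Complex.I * (j:ℂ) * (l:ℂ)) • a j := by
      refine continuous_tsum (fun j => ?_) ha (fun j l => ?_)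
      · exact (Complex.continuous_exp.comp
          (continuous_const.mul Complex.continuous_ofReal)).smul continuous_const
      · rw [norm_smul, norm_exp_nat, one_mul]
    refine (memLp_top_of_bound hcont.aestronglyMeasurable (∑' j : ℕ, ‖a j‖)
      (Filter.Eventually.of_forall fun l => ?_)).mono_exponent le_top
    calc ‖∑' j : ℕ, Complex.exp (Complex.I * (j:ℂ) * (l:ℂ)) • a j‖
        ≤ ∑' j : ℕ, ‖Complex.exp (Complex.I * (j:ℂ) * (l:ℂ)) • a j‖ := by
          refine norm_tsum_le_tsum_norm ?_
          have : (fun j : ℕ => ‖Complex.exp (Complex.I * (j:ℂ) * (l:ℂ)) • a j‖)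
              = fun j : ℕ => ‖a j‖ := by
            funext j; rw [norm_smul, norm_exp_nat, one_mul]
          rwa [this]
      _ = ∑' j : ℕ, ‖a j‖ := by
          refine tsum_congr fun j => ?_
          rw [norm_smul, norm_exp_nat, one_mul]
  set S : ℂ := ∑' j : ℕ, (inner ℂ (c j) (a j) : ℂ) with hS
  -- the A-part integral
  have hcj : ∀ j : ℕ, (∫ l, Complex.exp (-Complex.I * (j:ℂ) * (l:ℂ)) • w l ∂pmeas)
      = ((2 * Real.pi : ℝ) : ℂ) • c j := by
    intro j
    rw [hc j, smul_smul, mul_inv_cancel₀ h2pi, one_smul]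
  have hIA : ∫ l, (inner ℂ (w l) (A l) : ℂ) ∂pmeas = ((2 * Real.pi : ℝ) : ℂ) * S := by
    rw [hAeq]
    rw [inner_A_part hwL2 a ha]
    calc (∑' j : ℕ,
          (inner ℂ (∫ l, Complex.exp (-Complex.I * (j:ℂ) * (l:ℂ)) • w l ∂pmeas) (a j) : ℂ))
        = ∑' j : ℕ, ((2 * Real.pi : ℝ) : ℂ) * (inner ℂ (c j) (a j) : ℂ) := by
          refine tsum_congr fun j => ?_
          rw [hcj j, inner_smul_left, Complex.conj_ofReal]
      _ = ((2 * Real.pi : ℝ) : ℂ) * S := tsum_mul_left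
  -- the h0-part vanishes
  have hIh : ∫ l, (inner ℂ (w l) (h0 l) : ℂ) ∂pmeas = 0 :=
    inner_orth hwL2 hh0.1 hworth hh0.2
  -- integrability
  have hwAint : Integrable (fun l => (inner ℂ (w l) (A l) : ℂ)) pmeas :=
    integrable_inner_of_memL2 hwL2 hA2
  have hwhint : Integrable (fun l => (inner ℂ (w l) (h0 l) : ℂ)) pmeas :=
    integrable_inner_of_memL2 hwL2 hh0.1
  set g : ℝ → ℂ := fun l => (inner ℂ (w l) (A l - h0 l) : ℂ) with hg
  have hgeq : g = fun l => (inner ℂ (w l) (A l) : ℂ) - (inner ℂ (w l) (h0 l) : ℂ) := by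
    funext l; simp only [hg, inner_sub_right]
  have hgint : Integrable g pmeas := by
    rw [hgeq]; exact hwAint.sub hwhint
  have hIg : ∫ l, g l ∂pmeas = ((2 * Real.pi : ℝ) : ℂ) * S := by
    rw [hgeq, integral_sub hwAint hwhint, hIA, hIh, sub_zero]
  -- pointwise positivity and realness
  have hgFl : ∀ l, g l = (inner ℂ ((F l) (A l - h0 l)) (A l - h0 l) : ℂ) := by
    intro l; rw [hg]; simp only [hw l]
  have hgre : ∀ l, 0 ≤ (g l).re := by
    intro l
    rw [hgFl l]
    exact (hFpos l).re_inner_nonneg_left (A l - h0 l)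
  have hgim : ∀ l, (g l).im = 0 := by
    intro l
    rw [hgFl l]
    have hsym := (hFpos l).isSymmetric
    refine Complex.conj_eq_iff_im.mp ?_
    calc (starRingEnd ℂ) (inner ℂ ((F l) (A l - h0 l)) (A l - h0 l) : ℂ)
        = (inner ℂ (A l - h0 l) ((F l) (A l - h0 l)) : ℂ) := inner_conj_symm _ _
      _ = (inner ℂ ((F l) (A l - h0 l)) (A l - h0 l) : ℂ) := (hsym (A l - h0 l) (A l - h0 l)).symm
  -- real-part integral
  have hre_int : Integrable (fun l => (g l).re) pmeas := hgint.re
  have hre_nonneg : 0 ≤ ∫ l, (g l).re ∂pmeas := integral_nonneg fun l => hgre l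
  have hre_val : ∫ l, (g l).re ∂pmeas = 2 * Real.pi * S.re := by
    have h3 : ∫ l, (g l).re ∂pmeas = (∫ l, g l ∂pmeas).re := integral_re hgint
    rw [h3, hIg]
    simp [Complex.mul_re]
  have him_val : (0:ℝ) = 2 * Real.pi * S.im := by
    have h1 : ∫ l, (g l).im ∂pmeas = (∫ l, g l ∂pmeas).im := integral_im hgint
    rw [hIg] at h1
    have h2 : ∫ l, (g l).im ∂pmeas = 0 := by
      rw [integral_congr_ae (Filter.Eventually.of_forall fun l => hgim l)]
      simp
    rw [h2] at h1
    simpa [Complex.mul_im] using h1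
  have hSim : S.im = 0 := by
    exact (mul_eq_zero.mp him_val.symm).resolve_left (ne_of_gt h2pi_pos)
  have hSre : 0 ≤ S.re := by
    rw [hre_val] at hre_nonneg
    nlinarith [Real.pi_pos]
  -- summability
  have hsummable : Summable fun j : ℕ => (inner ℂ (a j) (c j) : ℂ) := by
    set M : ℝ := ‖(((2 * Real.pi : ℝ) : ℂ))⁻¹‖ * ∫ l, ‖w l‖ ∂pmeas with hM
    refine Summable.of_norm_bounded (g := fun j => ‖a j‖ * M) (ha.mul_right M) fun j => ?_
    calc ‖(inner ℂ (a j) (c j) : ℂ)‖ ≤ ‖a j‖ * ‖c j‖ := norm_inner_le_norm _ _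
      _ ≤ ‖a j‖ * M := by
          refine mul_le_mul_of_nonneg_left ?_ (norm_nonneg _)
          rw [hc j, norm_smul, hM]
          refine mul_le_mul_of_nonneg_left ?_ (norm_nonneg _)
          calc ‖∫ l, Complex.exp (-Complex.I * (j:ℂ) * (l:ℂ)) • w l ∂pmeas‖
              ≤ ∫ l, ‖Complex.exp (-Complex.I * (j:ℂ) * (l:ℂ)) • w l‖ ∂pmeas :=
                norm_integral_le_integral_norm _
            _ = ∫ l, ‖w l‖ ∂pmeas := by
                refine integral_congr_ae (Filter.Eventually.of_forall fun l => ?_)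
                simp only [norm_smul, norm_exp_nat', one_mul]
  -- the target sum is conj S
  have hTgt : (∑' j : ℕ, (inner ℂ (a j) (c j) : ℂ)) = (starRingEnd ℂ) S := by
    calc (∑' j : ℕ, (inner ℂ (a j) (c j) : ℂ))
        = ∑' j : ℕ, star (inner ℂ (c j) (a j) : ℂ) :=
          tsum_congr fun j => (inner_conj_symm (a j) (c j)).symm
      _ = star S := tsum_star.symm
  refine ⟨hsummable, ?_, ?_, ?_⟩
  · rw [hTgt]; simp [hSim]
  · rw [hTgt]; simpa using hSre
  · rw [hTgt]
    have hconjre : ((starRingEnd ℂ) S).re = S.re := Complex.conj_re S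
    rw [hconjre]
    rw [MSE0]
    have hintegrand : ∀ l : ℝ,
        ENNReal.ofReal ((inner ℂ ((F l) (A l - h0 l)) (A l - h0 l) : ℂ)).re
          = ENNReal.ofReal ((g l).re) := by
      intro l; rw [hgFl l]
    rw [lintegral_congr hintegrand,
      ← ofReal_integral_eq_lintegral_ofReal hre_int (Filter.Eventually.of_forall hgre),
      ← ENNReal.ofReal_mul (by positivity), hre_val]
    congr 1
    field_simp
end
end

section
/- In the setting of the factorization lower bound, assume in addition: Q : [−π,π) → (ℓ²)^M is measurable with rows q_r(λ) ∈ ℓ² (r = 1,…,M) such that Q(λ)P(λ) = I_M for almost every λ, where P(λ) : ℂ^M → ℓ² is P(λ)v = Σ_{u=0}^∞ e^{−iuλ} d(u)v and (Q(λ)x)_r = Σ_k (q_r(λ))_k·x_k. Let S ∈ L²([−π,π); ℂ^M) be the function whose Fourier coefficients are (1/2π)∫ S(λ)e^{−itλ}dλ = s_t for t ≥ 0 and 0 for t < 0, and define h(λ) := A(λ) − Q(λ)ᵀS(λ), where (Q(λ)ᵀv)_k = Σ_{r=1}^M (q_r(λ))_k·v_r. If h takes values in ℓ² with ∫_{−π}^{π}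 ‖h(λ)‖² dλ < ∞ and h is a negative-frequency function, then (1/2π)·∫_{−π}^{π} ‖ Σ_{u=0}^∞ e^{−iuλ}·d(u)ᵀ(A(λ)−h(λ)) ‖²_{ℂ^M} dλ = Σ_{t=0}^∞ ‖s_t‖²_{ℂ^M}; i.e. h attains the lower bound and is an optimal spectral characteristic, with minimal mean square error Σ_t ‖s_t‖². -/
open MeasureTheory
open scoped ENNReal

noncomputable section

instance inst_s9 : IsFiniteMeasure pmeas := by
  constructor
  rw [pmeas, Measure.restrict_apply_univ, Real.volume_Ico]
  exact ENNReal.ofReal_lt_top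

lemma hpq22 : ((2:ℝ≥0∞).toReal).HolderConjugate ((2:ℝ≥0∞).toReal) := by
  rw [ENNReal.toReal_ofNat]; exact ⟨by norm_num, by norm_num, by norm_num⟩

lemma elltwo_summable_norm_mul (f g : Elltwo) : Summable fun k => ‖f k‖ * ‖g k‖ :=
  lp.summable_mul hpq22 f g

lemma elltwo_summable_mul (f g : Elltwo) : Summable fun k => f k * g k :=
  Summable.of_norm (by simpa [norm_mul] using elltwo_summable_norm_mul f g)

lemma elltwo_tsum_norm_mul_le (f g : Elltwo) : ∑' k, ‖f k‖ * ‖g k‖ ≤ ‖f‖ * ‖g‖ :=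
  lp.tsum_mul_le_mul_norm' hpq22 f g

lemma elltwo_norm_tsum_mul_le (f g : Elltwo) : ‖∑' k, f k * g k‖ ≤ ‖f‖ * ‖g‖ := by
  refine (norm_tsum_le_tsum_norm ?_).trans ?_
  · simpa [norm_mul] using elltwo_summable_norm_mul f g
  · simpa [norm_mul] using elltwo_tsum_norm_mul_le f g

def elltwoEval (k : ℕ) : Elltwo →L[ℂ] ℂ :=
  LinearMap.mkContinuous
    { toFun := fun f => f k
      map_add' := fun f g => by simp [lp.coeFn_add]
      map_smul' := fun c f => by simp [lp.coeFn_smul] }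
    1 (fun f => by show ‖f k‖ ≤ 1 * ‖f‖; simpa using lp.norm_apply_le_norm (by norm_num) f k)

lemma elltwo_tsum_apply {F : ℕ → Elltwo} (hF : Summable fun u => ‖F u‖) (k : ℕ) :
    (∑' u, F u) k = ∑' u, F u k := by
  have hs : Summable F := Summable.of_norm hF
  have := (elltwoEval k).hasSum hs.hasSum
  exact this.tsum_eq.symm

lemma norm_exp_eul (z : ℂ) (hz : z.im = 0) (l : ℝ) : ‖Complex.exp (-Complex.I * z * l)‖ = 1 := by
  rw [Complex.norm_exp]
  have : (-Complex.I * z * (l:ℂ)).re = 0 := by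
    simp [Complex.mul_re, Complex.mul_im, hz]
  rw [this, Real.exp_zero]

lemma parseval_coord (f : ℝ → ℂ) (hf : MemLp f 2 pmeas) (c : ℕ → ℂ)
    (hpos : ∀ t : ℕ, (((2 * Real.pi : ℝ) : ℂ))⁻¹ *
      (∫ l, Complex.exp (-Complex.I * (t : ℂ) * (l : ℂ)) * f l ∂pmeas) = c t)
    (hneg : ∀ t : ℤ, t < 0 →
      (∫ l, Complex.exp (-Complex.I * (t : ℂ) * (l : ℂ)) * f l ∂pmeas) = 0) :
    (1 / (2 * Real.pi)) * ∫ l, ‖f l‖ ^ 2 ∂pmeas = ∑' t : ℕ, ‖c t‖ ^ 2 := by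
  haveI hT : Fact (0 < 2 * Real.pi) := ⟨Real.two_pi_pos⟩
  set T : ℝ := 2 * Real.pi with hTdef
  set a : ℝ := -Real.pi with hadef
  have hpi : a + T = Real.pi := by rw [hadef, hTdef]; ring
  -- measurable representative
  set ft : ℝ → ℂ := hf.1.mk f with hftdef
  have hftm : StronglyMeasurable ft := hf.1.stronglyMeasurable_mk
  have hfeq : f =ᵐ[pmeas] ft := hf.1.ae_eq_mk
  set g : AddCircle T → ℂ := AddCircle.liftIoc T a ft with hgdef
  have hgm : StronglyMeasurable g := by
    have : g = ft ∘ (fun z : AddCircle T => ((AddCircle.measurableEquivIoc T a z : Set.Ioc a (a+T)) : ℝ)) := rfl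
    rw [this]
    exact hftm.comp_measurable (measurable_subtype_coe.comp (AddCircle.measurableEquivIoc T a).measurable)
  have hgc : ∀ x ∈ Set.Ioc a (a + T), g ↑x = ft x := fun x hx => AddCircle.liftIoc_coe_apply hx
  -- transfer of the square lintegral
  have hIoc : Set.Ioc a (a + T) = Set.Ioc (-Real.pi) Real.pi := by rw [hpi, hadef]
  have hfeq' : f =ᵐ[volume.restrict (Set.Ioc a (a+T))] ft := by
    rw [hIoc, ← pmeas_eq_Ioc]; exact hfeq
  have hsq : ∫⁻ z, ‖g z‖₊ ^ (2:ℝ) ∂(volume) = ∫⁻ l, ‖f l‖₊ ^ (2:ℝ) ∂pmeas := by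
    rw [← AddCircle.lintegral_preimage T a (fun z => ‖g z‖₊ ^ (2:ℝ))]
    calc ∫⁻ x in Set.Ioc a (a+T), ‖g ↑x‖₊ ^ (2:ℝ)
        = ∫⁻ x in Set.Ioc a (a+T), ‖ft x‖₊ ^ (2:ℝ) :=
          setLIntegral_congr_fun measurableSet_Ioc
            (fun x hx => by rw [hgc x hx])
      _ = ∫⁻ x in Set.Ioc a (a+T), ‖f x‖₊ ^ (2:ℝ) :=
          lintegral_congr_ae (by filter_upwards [hfeq'] with x hx; rw [hx])
      _ = ∫⁻ l, ‖f l‖₊ ^ (2:ℝ) ∂pmeas := by rw [hIoc, ← pmeas_eq_Ioc]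
  -- Memℒp of g
  have hfin : ∫⁻ l, ‖f l‖₊ ^ (2:ℝ) ∂pmeas < ⊤ := by
    have h2 := hf.2
    rw [eLpNorm_eq_lintegral_rpow_enorm_toReal (by norm_num) (by norm_num)] at h2
    simp only [ENNReal.toReal_ofNat] at h2
    exact (ENNReal.rpow_lt_top_iff_of_pos (by norm_num)).mp h2
  have hgmem : MemLp g 2 (@AddCircle.haarAddCircle T hT) := by
    refine ⟨hgm.aestronglyMeasurable, ?_⟩
    rw [eLpNorm_eq_lintegral_rpow_enorm_toReal (by norm_num) (by norm_num)]
    simp only [ENNReal.toReal_ofNat]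
    refine (ENNReal.rpow_lt_top_iff_of_pos (by norm_num)).mpr ?_
    have hv : ∫⁻ z, ‖g z‖₊ ^ (2:ℝ) ∂(volume) =
        ENNReal.ofReal T * ∫⁻ z, ‖g z‖₊ ^ (2:ℝ) ∂(@AddCircle.haarAddCircle T hT) := by
      rw [AddCircle.volume_eq_smul_haarAddCircle, lintegral_smul_measure, smul_eq_mul]
    rw [hsq] at hv
    by_contra hcon
    push_neg at hcon
    simp only [enorm_eq_nnnorm] at hcon
    rw [top_le_iff.mp hcon, ENNReal.mul_top (by simp [ENNReal.ofReal_eq_zero, not_le, hT.out])] at hv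
    exact absurd hv (ne_top_of_lt hfin)
  -- the Lp element
  set F : Lp ℂ 2 (@AddCircle.haarAddCircle T hT) := hgmem.toLp g with hFdef
  have hFg : ⇑F =ᵐ[@AddCircle.haarAddCircle T hT] g := hgmem.coeFn_toLp
  have hcoeff_eq : ∀ n : ℤ, fourierCoeff (⇑F) n = fourierCoeff g n := fun n =>
    integral_congr_ae (by filter_upwards [hFg] with z hz; rw [hz])
  have hint_eq : ∫ z, ‖F z‖ ^ 2 ∂(@AddCircle.haarAddCircle T hT)
      = ∫ z, ‖g z‖ ^ 2 ∂(@AddCircle.haarAddCircle T hT) :=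
    integral_congr_ae (by filter_upwards [hFg] with z hz; rw [hz])
  -- computing the Fourier coefficients of g
  have hcg : ∀ n : ℤ, fourierCoeff g n =
      ((2 * Real.pi : ℝ) : ℂ)⁻¹ * ∫ l, Complex.exp (-Complex.I * (n : ℂ) * (l : ℂ)) * f l ∂pmeas := by
    intro n
    rw [hgdef, fourierCoeff_liftIoc_eq, fourierCoeffOn_eq_integral,
      intervalIntegral.integral_of_le (by linarith [hT.out] : a ≤ a + T)]
    have hker : ∀ x : ℝ, (fourier (-n) (↑x : AddCircle (a + T - a)) : ℂ)
        = Complex.exp (-Complex.I * (n : ℂ) * (x : ℂ)) := by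
      intro x
      rw [fourier_coe_apply]
      congr 1
      have h1 : a + T - a = 2 * Real.pi := by ring
      rw [h1]
      push_cast
      have h2 : (Real.pi : ℂ) ≠ 0 := by
        simpa using Real.pi_ne_zero
      field_simp
    have hI : ∫ x in Set.Ioc a (a+T), (fourier (-n) (↑x : AddCircle (a + T - a)) : ℂ) • ft x
        = ∫ l, Complex.exp (-Complex.I * (n : ℂ) * (l : ℂ)) * f l ∂pmeas := by
      calc ∫ x in Set.Ioc a (a+T), (fourier (-n) (↑x : AddCircle (a + T - a)) : ℂ) • ft x
          = ∫ x in Set.Ioc a (a+T), Complex.exp (-Complex.I * (n : ℂ) * (x : ℂ)) * ft x := by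
            refine setIntegral_congr_fun measurableSet_Ioc fun x _ => ?_
            rw [hker x, smul_eq_mul]
        _ = ∫ x in Set.Ioc a (a+T), Complex.exp (-Complex.I * (n : ℂ) * (x : ℂ)) * f x :=
            integral_congr_ae (by filter_upwards [hfeq'] with x hx; rw [hx])
        _ = ∫ l, Complex.exp (-Complex.I * (n : ℂ) * (l : ℂ)) * f l ∂pmeas := by
            rw [hIoc, ← pmeas_eq_Ioc]
    rw [hI]
    have h1 : (1 / (a + T - a) : ℝ) = 1 / (2 * Real.pi) := by rw [show a + T - a = 2*Real.pi by ring]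
    rw [h1, Complex.real_smul]
    push_cast
    rw [one_div]
  have hcpos : ∀ t : ℕ, fourierCoeff g (t : ℤ) = c t := by
    intro t
    rw [hcg]
    exact_mod_cast hpos t
  have hcneg : ∀ n : ℤ, n < 0 → fourierCoeff g n = 0 := fun n hn => by
    rw [hcg, hneg n hn, mul_zero]
  have hts : ∑' n : ℤ, ‖fourierCoeff g n‖ ^ 2 = ∑' t : ℕ, ‖c t‖ ^ 2 := by
    rw [← Function.Injective.tsum_eq (g := ((↑) : ℕ → ℤ)) Nat.cast_injective ?_]
    · exact tsum_congr fun t => by rw [hcpos t]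
    · intro n hn
      by_contra hmem
      have hlt : n < 0 := by
        by_contra hge
        push_neg at hge
        exact hmem ⟨n.toNat, Int.toNat_of_nonneg hge⟩
      rw [Function.mem_support, hcneg n hlt] at hn
      simp at hn
  -- the right-hand side integral
  have hvol : ∫ z, ‖g z‖ ^ 2 ∂(volume) = ∫ l, ‖f l‖ ^ 2 ∂pmeas := by
    rw [← AddCircle.integral_preimage T a (fun z => ‖g z‖ ^ 2)]
    calc ∫ x in Set.Ioc a (a+T), ‖g ↑x‖ ^ 2
        = ∫ x in Set.Ioc a (a+T), ‖ft x‖ ^ 2 :=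
          setIntegral_congr_fun measurableSet_Ioc fun x hx => by rw [hgc x hx]
      _ = ∫ x in Set.Ioc a (a+T), ‖f x‖ ^ 2 :=
          integral_congr_ae (by filter_upwards [hfeq'] with x hx; rw [hx])
      _ = ∫ l, ‖f l‖ ^ 2 ∂pmeas := by rw [hIoc, ← pmeas_eq_Ioc]
  have hR : ∫ z, ‖g z‖ ^ 2 ∂(@AddCircle.haarAddCircle T hT)
      = (1 / (2 * Real.pi)) * ∫ l, ‖f l‖ ^ 2 ∂pmeas := by
    have hv : ∫ z, ‖g z‖ ^ 2 ∂(volume : Measure (AddCircle T))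
        = T * ∫ z, ‖g z‖ ^ 2 ∂(@AddCircle.haarAddCircle T hT) := by
      rw [AddCircle.volume_eq_smul_haarAddCircle, integral_smul_measure,
        ENNReal.toReal_ofReal hT.out.le, smul_eq_mul]
    rw [hvol] at hv
    have hTne : T ≠ 0 := hT.out.ne'
    field_simp [hTdef] at hv ⊢
    linarith [hv]
  calc (1 / (2*Real.pi)) * ∫ l, ‖f l‖ ^ 2 ∂pmeas
      = ∫ z, ‖g z‖ ^ 2 ∂(@AddCircle.haarAddCircle T hT) := hR.symm
    _ = ∫ z, ‖F z‖ ^ 2 ∂(@AddCircle.haarAddCircle T hT) := hint_eq.symm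
    _ = ∑' n : ℤ, ‖fourierCoeff (⇑F) n‖ ^ 2 := (tsum_sq_fourierCoeff F).symm
    _ = ∑' n : ℤ, ‖fourierCoeff g n‖ ^ 2 := tsum_congr fun n => by rw [hcoeff_eq n]
    _ = ∑' t : ℕ, ‖c t‖ ^ 2 := hts

theorem factorization_bound_attained
    (M : ℕ) (hM : 1 ≤ M)
    (d : ℕ → Fin M → Elltwo)
    (hd : Summable fun u : ℕ => Real.sqrt (∑ r : Fin M, ‖d u r‖ ^ 2))
    (a : ℕ → Elltwo)
    (ha1 : Summable fun j : ℕ => ‖a j‖)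
    (ha2 : Summable fun j : ℕ => ((j : ℝ) + 1) * ‖a j‖ ^ 2)
    (A : ℝ → Elltwo)
    (hA : ∀ l : ℝ, A l = ∑' j : ℕ, Complex.exp (Complex.I * (j : ℂ) * (l : ℂ)) • a j)
    (s : ℕ → EuclideanSpace ℂ (Fin M))
    (hs : ∀ (t : ℕ) (r : Fin M),
      s t r = ∑' p : ℕ, ∑' k : ℕ, d p r k * a (p + t) k)
    (hssum : Summable fun t : ℕ => ‖s t‖ ^ 2)
    (Q : ℝ → Fin M → Elltwo)
    (hQmeas : ∀ r : Fin M, AEStronglyMeasurable (fun l : ℝ => Q l r) pmeas)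
    (P : ℝ → Fin M → Elltwo)
    (hP : ∀ (l : ℝ) (r : Fin M),
      P l r = ∑' u : ℕ, Complex.exp (-Complex.I * (u : ℂ) * (l : ℂ)) • d u r)
    (hQP : ∀ᵐ l ∂pmeas, ∀ r r' : Fin M,
      (∑' k : ℕ, Q l r k * P l r' k) = if r = r' then 1 else 0)
    (S : ℝ → EuclideanSpace ℂ (Fin M))
    (hSL2 : MemLp S 2 pmeas)
    (hSpos : ∀ t : ℕ,
      ((2 * Real.pi : ℝ) : ℂ)⁻¹ •
        (∫ l, Complex.exp (-Complex.I * (t : ℂ) * (l : ℂ)) • S l ∂pmeas) = s t)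
    (hSneg : ∀ t : ℤ, t < 0 →
      ((2 * Real.pi : ℝ) : ℂ)⁻¹ •
        (∫ l, Complex.exp (-Complex.I * (t : ℂ) * (l : ℂ)) • S l ∂pmeas) = 0)
    (h : ℝ → Elltwo)
    (hh : ∀ (l : ℝ) (k : ℕ), h l k = A l k - ∑ r : Fin M, Q l r k * S l r)
    (hneg : NegFreq h) :
    ENNReal.ofReal (1 / (2 * Real.pi)) *
        ∫⁻ l, ENNReal.ofReal
          (‖(show EuclideanSpace ℂ (Fin M) from WithLp.toLp 2 fun r : Fin M =>
              ∑' u : ℕ, Complex.exp (-Complex.I * (u : ℂ) * (l : ℂ)) *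
                ∑' k : ℕ, d u r k * (A l - h l) k)‖ ^ 2) ∂pmeas
      = ENNReal.ofReal (∑' t : ℕ, ‖s t‖ ^ 2) := by
  -- 1. norms of the exponential kernel
  have he1 : ∀ (u : ℕ) (l : ℝ), ‖Complex.exp (-Complex.I * (u : ℂ) * (l : ℂ))‖ = 1 :=
    fun u l => norm_exp_eul (u : ℂ) (by simp) l
  have he2 : ∀ (u : ℕ) (l : ℝ), ‖Complex.exp (-(Complex.I * (u:ℂ) * (l:ℂ)))‖ = 1 := by
    intro u l
    have := he1 u l
    rwa [neg_mul, neg_mul] at this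
  have hdr : ∀ r : Fin M, Summable fun u => ‖d u r‖ := by
    intro r
    refine hd.of_nonneg_of_le (fun u => norm_nonneg _) fun u => ?_
    rw [show ‖d u r‖ = Real.sqrt (‖d u r‖^2) from (Real.sqrt_sq (norm_nonneg _)).symm]
    exact Real.sqrt_le_sqrt (Finset.single_le_sum (f := fun r' => ‖d u r'‖^2)
      (fun i _ => sq_nonneg _) (Finset.mem_univ r))
  have hPapp : ∀ (l : ℝ) (r : Fin M) (k : ℕ),
      P l r k = ∑' u : ℕ, Complex.exp (-Complex.I * (u : ℂ) * (l : ℂ)) * d u r k := by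
    intro l r k
    have hsumF : Summable fun u : ℕ => ‖Complex.exp (-Complex.I * (u : ℂ) * (l : ℂ)) • d u r‖ := by
      refine (hdr r).congr fun u => ?_
      rw [norm_smul, he1, one_mul]
    rw [hP l r, elltwo_tsum_apply hsumF k]
    exact tsum_congr fun u => by simp [lp.coeFn_smul]
  -- 2. the a.e. pointwise identity
  have hae : ∀ᵐ (l : ℝ) ∂pmeas, (show EuclideanSpace ℂ (Fin M) from WithLp.toLp 2 fun r : Fin M =>
      ∑' u : ℕ, Complex.exp (-Complex.I * (u : ℂ) * (l : ℂ)) *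
        ∑' k : ℕ, d u r k * (A l - h l) k) = S l := by
    filter_upwards [hQP] with l hQPl
    ext r
    show (∑' u : ℕ, Complex.exp (-Complex.I * (u : ℂ) * (l : ℂ)) *
        ∑' k : ℕ, d u r k * (A l - h l) k) = S l r
    have hw : ∀ k : ℕ, (A l - h l) k = ∑ r' : Fin M, Q l r' k * S l r' := by
      intro k
      have h1 : (A l - h l) k = A l k - h l k := by
        rw [lp.coeFn_sub]; rfl
      rw [h1, hh l k]; ring
    have step1 : ∀ u : ℕ, (∑' k, d u r k * (A l - h l) k)
        = ∑ r' : Fin M, (∑' k, d u r k * Q l r' k) * S l r' := by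
      intro u
      calc ∑' k, d u r k * (A l - h l) k
          = ∑' k, ∑ r' : Fin M, (d u r k * Q l r' k) * S l r' := by
            refine tsum_congr fun k => ?_
            rw [hw k, Finset.mul_sum]
            exact Finset.sum_congr rfl fun r' _ => by ring
        _ = ∑ r' : Fin M, ∑' k, (d u r k * Q l r' k) * S l r' :=
            Summable.tsum_finsetSum fun r' _ => (elltwo_summable_mul (d u r) (Q l r')).mul_right (S l r')
        _ = ∑ r' : Fin M, (∑' k, d u r k * Q l r' k) * S l r' :=
            Finset.sum_congr rfl fun r' _ => tsum_mul_right
    have hcb : ∀ (u : ℕ) (r' : Fin M), ‖∑' k, d u r k * Q l r' k‖ ≤ ‖d u r‖ * ‖Q l r'‖ :=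
      fun u r' => elltwo_norm_tsum_mul_le _ _
    have hsumc : ∀ r' : Fin M, Summable fun u : ℕ =>
        Complex.exp (-Complex.I * (u : ℂ) * (l : ℂ)) * ((∑' k, d u r k * Q l r' k) * S l r') := by
      intro r'
      apply Summable.of_norm
      have hb : Summable fun u : ℕ => (‖d u r‖ * ‖Q l r'‖) * ‖S l r'‖ :=
        ((hdr r).mul_right _).mul_right _
      refine hb.of_nonneg_of_le (fun u => norm_nonneg _) fun u => ?_
      rw [norm_mul, norm_mul, he1, one_mul]
      exact mul_le_mul_of_nonneg_right (hcb u r') (norm_nonneg _)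
    have step2 : (∑' u : ℕ, Complex.exp (-Complex.I * (u : ℂ) * (l : ℂ)) *
        ∑' k, d u r k * (A l - h l) k)
        = ∑ r' : Fin M, (∑' u : ℕ, Complex.exp (-Complex.I * (u : ℂ) * (l : ℂ)) *
            (∑' k, d u r k * Q l r' k)) * S l r' := by
      calc ∑' u : ℕ, Complex.exp (-Complex.I * (u : ℂ) * (l : ℂ)) * ∑' k, d u r k * (A l - h l) k
          = ∑' u : ℕ, ∑ r' : Fin M, Complex.exp (-Complex.I * (u : ℂ) * (l : ℂ)) *
              ((∑' k, d u r k * Q l r' k) * S l r') := by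
            refine tsum_congr fun u => ?_
            rw [step1 u, Finset.mul_sum]
        _ = ∑ r' : Fin M, ∑' u : ℕ, Complex.exp (-Complex.I * (u : ℂ) * (l : ℂ)) *
              ((∑' k, d u r k * Q l r' k) * S l r') := Summable.tsum_finsetSum fun r' _ => hsumc r'
        _ = ∑ r' : Fin M, (∑' u : ℕ, Complex.exp (-Complex.I * (u : ℂ) * (l : ℂ)) *
              (∑' k, d u r k * Q l r' k)) * S l r' := by
            refine Finset.sum_congr rfl fun r' _ => ?_
            rw [← tsum_mul_right]
            exact tsum_congr fun u => by ring
    have hswap : ∀ r' : Fin M, (∑' u : ℕ, Complex.exp (-Complex.I * (u : ℂ) * (l : ℂ)) *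
        (∑' k, d u r k * Q l r' k)) = ∑' k, Q l r' k * P l r k := by
      intro r'
      have hprod : Summable (Function.uncurry fun u k : ℕ =>
          Complex.exp (-Complex.I * (u : ℂ) * (l : ℂ)) * (d u r k * Q l r' k)) := by
        apply Summable.of_norm
        refine (summable_prod_of_nonneg fun p => norm_nonneg _).mpr ⟨fun u => ?_, ?_⟩
        · refine (elltwo_summable_norm_mul (d u r) (Q l r')).congr fun k => ?_
          simp [Function.uncurry, norm_mul, he2]
        · refine Summable.of_nonneg_of_le (fun u => tsum_nonneg fun k => norm_nonneg _)
            (fun u => ?_) ((hdr r).mul_right ‖Q l r'‖)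
          refine le_trans (le_of_eq (tsum_congr fun k => ?_))
            (elltwo_tsum_norm_mul_le (d u r) (Q l r'))
          simp [Function.uncurry, norm_mul, he2]
      calc ∑' u : ℕ, Complex.exp (-Complex.I * (u : ℂ) * (l : ℂ)) * (∑' k, d u r k * Q l r' k)
          = ∑' (u : ℕ) (k : ℕ), Complex.exp (-Complex.I * (u : ℂ) * (l : ℂ)) *
              (d u r k * Q l r' k) := tsum_congr fun u => tsum_mul_left.symm
        _ = ∑' (k : ℕ) (u : ℕ), Complex.exp (-Complex.I * (u : ℂ) * (l : ℂ)) *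
              (d u r k * Q l r' k) := (Summable.tsum_comm hprod).symm
        _ = ∑' k, (∑' u : ℕ, Complex.exp (-Complex.I * (u : ℂ) * (l : ℂ)) * d u r k) *
              Q l r' k := by
            refine tsum_congr fun k => ?_
            rw [← tsum_mul_right]
            exact tsum_congr fun u => by ring
        _ = ∑' k, Q l r' k * P l r k := by
            refine tsum_congr fun k => ?_
            rw [hPapp l r k, mul_comm]
    rw [step2]
    rw [Finset.sum_congr rfl (fun r' _ => by rw [hswap r', hQPl r' r])]
    simp
  -- 3. reduce the lintegral
  have hLHS : (∫⁻ l, ENNReal.ofReal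
        (‖(show EuclideanSpace ℂ (Fin M) from WithLp.toLp 2 fun r : Fin M =>
            ∑' u : ℕ, Complex.exp (-Complex.I * (u : ℂ) * (l : ℂ)) *
              ∑' k : ℕ, d u r k * (A l - h l) k)‖ ^ 2) ∂pmeas)
      = ∫⁻ l, ENNReal.ofReal (‖S l‖ ^ 2) ∂pmeas :=
    lintegral_congr_ae (by filter_upwards [hae] with l hl; rw [hl])
  rw [hLHS]
  have hrpow2 : ∀ x : ℝ, 0 ≤ x → x ^ ((2:ℝ≥0∞).toReal) = x ^ 2 := by
    intro x hx
    rw [ENNReal.toReal_ofNat, show (2:ℝ) = ((2:ℕ):ℝ) by norm_num, Real.rpow_natCast]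
  have hSint : Integrable (fun l => ‖S l‖ ^ 2) pmeas := by
    have := hSL2.integrable_norm_rpow (by norm_num) (by norm_num)
    refine this.congr (Filter.Eventually.of_forall fun l => ?_)
    exact hrpow2 _ (norm_nonneg _)
  have hofReal : ∫⁻ l, ENNReal.ofReal (‖S l‖ ^ 2) ∂pmeas
      = ENNReal.ofReal (∫ l, ‖S l‖ ^ 2 ∂pmeas) :=
    (ofReal_integral_eq_lintegral_ofReal hSint
      (Filter.Eventually.of_forall fun l => sq_nonneg _)).symm
  rw [hofReal, ← ENNReal.ofReal_mul (by positivity)]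
  congr 1
  -- 4. componentwise Fourier coefficients
  have hproj : ∀ r : Fin M, MemLp (fun l => S l r) 2 pmeas := fun r =>
    (EuclideanSpace.proj (𝕜 := ℂ) r).comp_memLp' hSL2
  have hSint1 : Integrable S pmeas := hSL2.integrable one_le_two
  have hint : ∀ c : ℂ, c.im = 0 →
      Integrable (fun (l : ℝ) => Complex.exp (-Complex.I * c * (l:ℂ)) • S l) pmeas := by
    intro c hc
    refine hSint1.norm.mono' ?_ ?_
    · exact ((Complex.continuous_exp.comp
        ((continuous_const.mul Complex.continuous_ofReal))).aestronglyMeasurable).smul hSL2.1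
    · refine Filter.Eventually.of_forall fun l => ?_
      rw [norm_smul, norm_exp_eul c hc l, one_mul]
  have hcomp : ∀ (c : ℂ), c.im = 0 → ∀ r : Fin M,
      (∫ l, Complex.exp (-Complex.I * c * (l:ℂ)) * S l r ∂pmeas)
        = (∫ l, Complex.exp (-Complex.I * c * (l:ℂ)) • S l ∂pmeas) r := by
    intro c hc r
    have hswap := (EuclideanSpace.proj (𝕜 := ℂ) r).integral_comp_comm (hint c hc)
    have h1 : (fun (l : ℝ) => Complex.exp (-Complex.I * c * (l:ℂ)) * S l r)
        = fun (l : ℝ) => (EuclideanSpace.proj (𝕜 := ℂ) r)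
            (Complex.exp (-Complex.I * c * (l:ℂ)) • S l) := by
      funext l
      simp [PiLp.proj_apply]
    rw [h1]
    exact hswap.trans (by simp [PiLp.proj_apply])
  have hposr : ∀ (r : Fin M) (t : ℕ),
      ((2 * Real.pi : ℝ) : ℂ)⁻¹ *
        (∫ l, Complex.exp (-Complex.I * (t : ℂ) * (l : ℂ)) * S l r ∂pmeas) = s t r := by
    intro r t
    have hc := hcomp (t : ℂ) (by simp) r
    rw [hc]
    have := congrArg (fun v : EuclideanSpace ℂ (Fin M) => v r) (hSpos t)
    simpa using this
  have hnegr : ∀ (r : Fin M) (t : ℤ), t < 0 →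
      (∫ l, Complex.exp (-Complex.I * (t : ℂ) * (l : ℂ)) * S l r ∂pmeas) = 0 := by
    intro r t ht
    have h2 : ((2 * Real.pi : ℝ) : ℂ)⁻¹ ≠ 0 := by
      simp [Real.pi_ne_zero]
    have h0 : (∫ l, Complex.exp (-Complex.I * (t : ℂ) * (l : ℂ)) • S l ∂pmeas) = 0 := by
      rcases smul_eq_zero.mp (hSneg t ht) with hcase | hcase
      · exact absurd hcase h2
      · exact hcase
    have hc := hcomp (t : ℂ) (by simp) r
    rw [hc, h0]
    rfl
  have hpar : ∀ r : Fin M, (1 / (2 * Real.pi)) * ∫ l, ‖S l r‖ ^ 2 ∂pmeas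
      = ∑' t : ℕ, ‖s t r‖ ^ 2 := fun r =>
    parseval_coord _ (hproj r) _ (fun t => hposr r t) (fun t ht => hnegr r t ht)
  -- 5. assemble
  have hnormsq : ∀ v : EuclideanSpace ℂ (Fin M), ‖v‖ ^ 2 = ∑ r : Fin M, ‖v r‖ ^ 2 := by
    intro v
    rw [EuclideanSpace.norm_eq, Real.sq_sqrt (by positivity)]
  have hcompint : ∀ r : Fin M, Integrable (fun l => ‖S l r‖ ^ 2) pmeas := by
    intro r
    have := (hproj r).integrable_norm_rpow (by norm_num) (by norm_num)
    refine this.congr (Filter.Eventually.of_forall fun l => ?_)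
    exact hrpow2 _ (norm_nonneg _)
  have hsplit : ∫ l, ‖S l‖ ^ 2 ∂pmeas = ∑ r : Fin M, ∫ l, ‖S l r‖ ^ 2 ∂pmeas := by
    rw [← integral_finset_sum Finset.univ (fun r _ => hcompint r)]
    exact integral_congr_ae (Filter.Eventually.of_forall fun l => hnormsq (S l))
  have hsr : ∀ r : Fin M, Summable fun t : ℕ => ‖s t r‖ ^ 2 := by
    intro r
    refine hssum.of_nonneg_of_le (fun t => sq_nonneg _) fun t => ?_
    calc ‖s t r‖ ^ 2 ≤ ∑ r' : Fin M, ‖s t r'‖ ^ 2 :=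
          Finset.single_le_sum (f := fun r' => ‖s t r'‖ ^ 2)
            (fun i _ => sq_nonneg _) (Finset.mem_univ r)
      _ = ‖s t‖ ^ 2 := (hnormsq (s t)).symm
  calc (1 / (2 * Real.pi)) * ∫ l, ‖S l‖ ^ 2 ∂pmeas
      = ∑ r : Fin M, (1 / (2 * Real.pi)) * ∫ l, ‖S l r‖ ^ 2 ∂pmeas := by
        rw [hsplit, Finset.mul_sum]
    _ = ∑ r : Fin M, ∑' t : ℕ, ‖s t r‖ ^ 2 := Finset.sum_congr rfl fun r _ => hpar r
    _ = ∑' t : ℕ, ∑ r : Fin M, ‖s t r‖ ^ 2 := (Summable.tsum_finsetSum fun r _ => hsr r).symm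
    _ = ∑' t : ℕ, ‖s t‖ ^ 2 := tsum_congr fun t => (hnormsq (s t)).symm
end
end
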